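/- Let N ≥ 1 and let U ⊆ ℝ^N be open. Let a, b, c : U → ℝ and μ¹, …, μ^N : U → ℝ be C¹ functions such that for every index i and every point of U one has ∂_i b = μ^i ∂_i a and ∂_i c = (a + (μ^i)²) ∂_i a. Let Ω ⊆ ℝ³ be open (coordinates x, y, t) and let R = (R¹, …, R^N) : Ω → U be C¹ with R^i_y = μ^i(R) R^i_x and R^i_t = (a(R) + (μ^i(R))²) R^i_x on Ω for every i. Then the functions A = a∘R, B = b∘R, C = c∘R satisfy on Ω the dispersionless KP system: A_y = B_x, A_t = C_x, B_t = C_y, and A_t − A·A_x − B_y = 0. -/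

import Mathlib

/-- Partial derivative of `f : ℝⁿ → ℝ` in the `i`-th coordinate direction. -/
noncomputable def pd {n : ℕ} (i : Fin n) (f : (Fin n → ℝ) → ℝ) (x : Fin n → ℝ) : ℝ :=
  fderiv ℝ f x (Pi.single i 1)

lemma fderiv_apply_eq_sum {n : ℕ} (f : (Fin n → ℝ) → ℝ) (x v : Fin n → ℝ) :
    fderiv ℝ f x v = ∑ i, v i * pd i f x := by
  have hv : v = ∑ i, v i • (Pi.single i 1 : Fin n → ℝ) := by
    ext j
    rw [Finset.sum_apply]
    simp [Pi.single_apply, Finset.sum_ite_eq', mul_comm]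
  conv_lhs => rw [hv]
  rw [map_sum]
  simp [pd, smul_eq_mul]

lemma pd_comp {n m : ℕ} (f : (Fin n → ℝ) → ℝ) (R : (Fin m → ℝ) → (Fin n → ℝ))
    (X : Fin m → ℝ) (hf : DifferentiableAt ℝ f (R X)) (hR : DifferentiableAt ℝ R X)
    (k : Fin m) :
    pd k (f ∘ R) X = ∑ i, pd i f (R X) * pd k (fun Y => R Y i) X := by
  have hcomp : fderiv ℝ (f ∘ R) X = (fderiv ℝ f (R X)).comp (fderiv ℝ R X) :=
    fderiv_comp (x := X) hf hR
  have hproj : ∀ i : Fin n, pd k (fun Y => R Y i) X = fderiv ℝ R X (Pi.single k 1) i := by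
    intro i
    have : (fun Y => R Y i) = (ContinuousLinearMap.proj i : (Fin n → ℝ) →L[ℝ] ℝ) ∘ R := rfl
    rw [pd, this, fderiv_comp (x := X) (ContinuousLinearMap.proj i).differentiableAt hR]
    simp
  rw [pd, hcomp]
  simp only [ContinuousLinearMap.comp_apply]
  rw [fderiv_apply_eq_sum]
  exact Finset.sum_congr rfl fun i _ => by rw [hproj i, mul_comm]

/-- The N-phase ansatz with characteristic speeds `λⁱ = a + (μⁱ)²` produces solutions of
the dispersionless KP system `A_y = B_x, A_t = C_x, B_t = C_y, A_t − A·A_x − B_y = 0`.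
Coordinates on `ℝ³` are `x = 0`, `y = 1`, `t = 2`. -/
theorem hydrodynamic_reductions_solve_dKP
    {N : ℕ} (hN : 1 ≤ N) (U : Set (Fin N → ℝ)) (hU : IsOpen U)
    (a b c : (Fin N → ℝ) → ℝ) (μ : Fin N → (Fin N → ℝ) → ℝ)
    (ha : ContDiffOn ℝ 1 a U) (hb : ContDiffOn ℝ 1 b U) (hc : ContDiffOn ℝ 1 c U)
    (hμ : ∀ i, ContDiffOn ℝ 1 (μ i) U)
    (hba : ∀ i : Fin N, ∀ R ∈ U, pd i b R = μ i R * pd i a R)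
    (hca : ∀ i : Fin N, ∀ R ∈ U, pd i c R = (a R + (μ i R) ^ 2) * pd i a R)
    (Ω : Set (Fin 3 → ℝ)) (hΩ : IsOpen Ω)
    (R : (Fin 3 → ℝ) → (Fin N → ℝ)) (hR : ContDiffOn ℝ 1 R Ω)
    (hRU : ∀ X ∈ Ω, R X ∈ U)
    (hRy : ∀ i : Fin N, ∀ X ∈ Ω,
      pd 1 (fun Y => R Y i) X = μ i (R X) * pd 0 (fun Y => R Y i) X)
    (hRt : ∀ i : Fin N, ∀ X ∈ Ω,
      pd 2 (fun Y => R Y i) X = (a (R X) + (μ i (R X)) ^ 2) * pd 0 (fun Y => R Y i) X) :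
    ∀ X ∈ Ω,
      pd 1 (a ∘ R) X = pd 0 (b ∘ R) X ∧
      pd 2 (a ∘ R) X = pd 0 (c ∘ R) X ∧
      pd 2 (b ∘ R) X = pd 1 (c ∘ R) X ∧
      pd 2 (a ∘ R) X - a (R X) * pd 0 (a ∘ R) X - pd 1 (b ∘ R) X = 0 := by
  intro X hX
  have hRX : R X ∈ U := hRU X hX
  have hRd : DifferentiableAt ℝ R X :=
    (hR.contDiffAt (hΩ.mem_nhds hX)).differentiableAt one_ne_zero
  have had : DifferentiableAt ℝ a (R X) :=
    (ha.contDiffAt (hU.mem_nhds hRX)).differentiableAt one_ne_zero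
  have hbd : DifferentiableAt ℝ b (R X) :=
    (hb.contDiffAt (hU.mem_nhds hRX)).differentiableAt one_ne_zero
  have hcd : DifferentiableAt ℝ c (R X) :=
    (hc.contDiffAt (hU.mem_nhds hRX)).differentiableAt one_ne_zero
  have ea := fun k => pd_comp a R X had hRd k
  have eb := fun k => pd_comp b R X hbd hRd k
  have ec := fun k => pd_comp c R X hcd hRd k
  refine ⟨?_, ?_, ?_, ?_⟩
  · rw [ea 1, eb 0]
    refine Finset.sum_congr rfl fun i _ => ?_
    rw [hRy i X hX, hba i (R X) hRX]; ring
  · rw [ea 2, ec 0]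
    refine Finset.sum_congr rfl fun i _ => ?_
    rw [hRt i X hX, hca i (R X) hRX]; ring
  · rw [eb 2, ec 1]
    refine Finset.sum_congr rfl fun i _ => ?_
    rw [hRt i X hX, hRy i X hX, hba i (R X) hRX, hca i (R X) hRX]; ring
  · rw [ea 2, ea 0, eb 1, Finset.mul_sum, ← Finset.sum_sub_distrib, ← Finset.sum_sub_distrib]
    refine Finset.sum_eq_zero fun i _ => ?_
    rw [hRt i X hX, hRy i X hX, hba i (R X) hRX]; ring
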